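/- Let A ∈ ℝ^{n×n}, C ∈ ℝ^{p̂×n}, τ_s > 0, let η ≥ 1 be an integer, and let W ∈ ℝ^{(η p̂)×n} be the matrix obtained by stacking C, C e^{Aτ_s}, …, C e^{A(η−1)τ_s}. Suppose W has a left inverse W† (i.e., W† W = I_n). Let N > 0, E ≥ 0, and e₀ ∈ ℝ^n with |e₀|_∞ ≤ E, and for i = 0, …, η−1 let y_i = C e^{A i τ_s} e₀ and let q_i ∈ ℝ^{p̂} satisfy |q_i − y_i|_∞ ≤ ‖C e^{A i τ_s}‖_∞ · E / N. Let q ∈ ℝ^{η p̂} be the stacking of q₀, …, q_{η−1}. Then | e^{A η τ_s} ( e₀ − W† q ) |_∞ ≤ ( ‖ e^{A η τ_s} W† ‖_∞ · max_{0 ≤ i ≤ η−1} ‖C e^{A i τ_s}‖_∞ / N ) · E. -/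

import Mathlib

open scoped Matrix

/-- The induced maximum-norm of a real matrix:
`‖M‖_∞ = sup {|Mv|_∞ : |v|_∞ = 1}`, where the norm on vectors is the sup norm. -/
noncomputable def opInfNorm {m : Type*} {n : Type*} [Fintype m] [Fintype n]
    (M : Matrix m n ℝ) : ℝ :=
  sSup {c : ℝ | ∃ v : n → ℝ, ‖v‖ = 1 ∧ c = ‖M.mulVec v‖}

section Aux

attribute [local instance] Matrix.linftyOpNormedAddCommGroup

lemma opInfNorm_bddAbove {m : Type*} {n : Type*} [Fintype m] [Fintype n]
    (M : Matrix m n ℝ) :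
    BddAbove {c : ℝ | ∃ v : n → ℝ, ‖v‖ = 1 ∧ c = ‖M.mulVec v‖} := by
  refine ⟨‖M‖, ?_⟩
  rintro c ⟨v, hv, rfl⟩
  calc ‖M.mulVec v‖ ≤ ‖M‖ * ‖v‖ := Matrix.linfty_opNorm_mulVec M v
    _ = ‖M‖ := by rw [hv, mul_one]

end Aux

lemma opInfNorm_nonneg {m : Type*} {n : Type*} [Fintype m] [Fintype n]
    (M : Matrix m n ℝ) : 0 ≤ opInfNorm M := by
  apply Real.sSup_nonneg
  rintro c ⟨v, hv, rfl⟩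
  exact norm_nonneg _

lemma norm_mulVec_le_opInfNorm {m : Type*} {n : Type*} [Fintype m] [Fintype n]
    (M : Matrix m n ℝ) (v : n → ℝ) :
    ‖M.mulVec v‖ ≤ opInfNorm M * ‖v‖ := by
  rcases eq_or_ne v 0 with rfl | hv
  · simp [Matrix.mulVec_zero]
  · have hnv : (0 : ℝ) < ‖v‖ := norm_pos_iff.mpr hv
    set u : n → ℝ := ‖v‖⁻¹ • v with hu
    have hun : ‖u‖ = 1 := by
      rw [hu, norm_smul, norm_inv, norm_norm, inv_mul_cancel₀ hnv.ne']
    have hmem : ‖M.mulVec u‖ ∈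
        {c : ℝ | ∃ w : n → ℝ, ‖w‖ = 1 ∧ c = ‖M.mulVec w‖} := ⟨u, hun, rfl⟩
    have hle : ‖M.mulVec u‖ ≤ opInfNorm M := le_csSup (opInfNorm_bddAbove M) hmem
    have hvu : v = ‖v‖ • u := by
      rw [hu, smul_smul, mul_inv_cancel₀ hnv.ne', one_smul]
    calc ‖M.mulVec v‖ = ‖M.mulVec (‖v‖ • u)‖ := by rw [← hvu]
      _ = ‖‖v‖ • M.mulVec u‖ := by rw [Matrix.mulVec_smul]
      _ = ‖v‖ * ‖M.mulVec u‖ := by rw [norm_smul, norm_norm]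
      _ ≤ ‖v‖ * opInfNorm M := by
          exact mul_le_mul_of_nonneg_left hle hnv.le
      _ = opInfNorm M * ‖v‖ := mul_comm _ _

/-- contraction of the estimation error over one quantization
cycle.  `W` stacks `C, Ce^{Aτs}, …, Ce^{A(η-1)τs}`, `W†` is a left inverse of
`W`, `y_i = Ce^{Aiτs} e₀` are the innovations and `q_i` their quantized values
with `|q_i - y_i|_∞ ≤ ‖Ce^{Aiτs}‖_∞ E / N`.  Then
`|e^{Aητs}(e₀ - W†q)|_∞ ≤ (‖e^{Aητs}W†‖_∞ · max_i ‖Ce^{Aiτs}‖_∞ / N) · E`.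
(The norm `‖·‖` on vectors is the sup norm; `NormedSpace.exp ℝ` is the matrix
exponential.) -/
theorem stmt_15 (n pd ηq : ℕ) (hηq : 1 ≤ ηq)
    (A : Matrix (Fin n) (Fin n) ℝ) (C : Matrix (Fin pd) (Fin n) ℝ)
    (τs : ℝ) (hτs : 0 < τs)
    (W : Matrix (Fin ηq × Fin pd) (Fin n) ℝ)
    (hW : ∀ (i : Fin ηq) (j : Fin pd) (l : Fin n),
      W (i, j) l = (C * NormedSpace.exp (((i : ℕ) * τs) • A)) j l)
    (Wd : Matrix (Fin n) (Fin ηq × Fin pd) ℝ) (hWd : Wd * W = 1)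
    (N E : ℝ) (hN : 0 < N) (hE : 0 ≤ E)
    (e₀ : Fin n → ℝ) (he₀ : ‖e₀‖ ≤ E)
    (q : Fin ηq → Fin pd → ℝ)
    (hq : ∀ i : Fin ηq,
      ‖q i - (C * NormedSpace.exp (((i : ℕ) * τs) • A)).mulVec e₀‖ ≤
        opInfNorm (C * NormedSpace.exp (((i : ℕ) * τs) • A)) * E / N) :
    ‖(NormedSpace.exp (((ηq : ℝ) * τs) • A)).mulVec
        (e₀ - Wd.mulVec (fun ij => q ij.1 ij.2))‖ ≤
      opInfNorm (NormedSpace.exp (((ηq : ℝ) * τs) • A) * Wd) *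
        (⨆ i : Fin ηq, opInfNorm (C * NormedSpace.exp (((i : ℕ) * τs) • A))) / N * E := by
  haveI : Nonempty (Fin ηq) := ⟨⟨0, hηq⟩⟩
  set M := NormedSpace.exp (((ηq : ℝ) * τs) • A) with hM
  set Ci := fun i : Fin ηq => C * NormedSpace.exp (((i : ℕ) * τs) • A) with hCi
  set q' : Fin ηq × Fin pd → ℝ := fun ij => q ij.1 ij.2 with hq'
  -- the residual vector
  set d : Fin ηq × Fin pd → ℝ := W.mulVec e₀ - q' with hd
  have hWe : Wd.mulVec (W.mulVec e₀) = e₀ := by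
    rw [Matrix.mulVec_mulVec, hWd, Matrix.one_mulVec]
  have key : e₀ - Wd.mulVec q' = Wd.mulVec d := by
    rw [hd, Matrix.mulVec_sub, hWe]
  -- rewrite the LHS
  have hLHS : M.mulVec (e₀ - Wd.mulVec q') = (M * Wd).mulVec d := by
    rw [key, Matrix.mulVec_mulVec]
  -- supremum of row norms
  set S := ⨆ i : Fin ηq, opInfNorm (Ci i) with hS
  have hS_le : ∀ i, opInfNorm (Ci i) ≤ S := fun i =>
    le_ciSup (f := fun i => opInfNorm (Ci i)) (Set.Finite.bddAbove (Set.finite_range _)) i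
  have hS_nonneg : 0 ≤ S := le_trans (opInfNorm_nonneg _) (hS_le (Classical.arbitrary _))
  -- bound on ‖d‖
  have hd_le : ‖d‖ ≤ S * E / N := by
    have hSEN : 0 ≤ S * E / N := by positivity
    rw [pi_norm_le_iff_of_nonneg hSEN]
    intro ij
    obtain ⟨i, j⟩ := ij
    have h1 : d (i, j) = ((W.mulVec e₀) (i, j)) - q i j := by simp [hd, hq']
    have h2 : (W.mulVec e₀) (i, j) = ((Ci i).mulVec e₀) j := by
      simp only [Matrix.mulVec, dotProduct]
      exact Finset.sum_congr rfl fun l _ => by rw [hW i j l]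
    have h3 : ‖d (i, j)‖ ≤ ‖q i - (Ci i).mulVec e₀‖ := by
      rw [h1, h2]
      have := norm_le_pi_norm (q i - (Ci i).mulVec e₀) j
      simpa [abs_sub_comm] using this
    refine h3.trans ((hq i).trans ?_)
    gcongr
    exact hS_le i
  -- combine
  calc ‖M.mulVec (e₀ - Wd.mulVec q')‖ = ‖(M * Wd).mulVec d‖ := by rw [hLHS]
    _ ≤ opInfNorm (M * Wd) * ‖d‖ := norm_mulVec_le_opInfNorm _ _
    _ ≤ opInfNorm (M * Wd) * (S * E / N) :=
        mul_le_mul_of_nonneg_left hd_le (opInfNorm_nonneg _)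
    _ = opInfNorm (M * Wd) * S / N * E := by ring
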